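/- Let (X₁, Y₁), ..., (X_m, Y_m), (X, Y) be exchangeable random pairs, with Y real-valued. Let L, U : X-space → R be fixed measurable functions, define conformity scores λ_i = max(L(X_i) - Y_i, Y_i - U(X_i)), assume the scores λ₁,...,λ_m, λ = max(L(X)-Y, Y-U(X)) are almost surely distinct, and let q be the ⌈(1-α)(m+1)⌉-th smallest among λ₁,...,λ_m, for α ∈ (1/(m+1), 1). Then P( L(X) - q ≤ Y ≤ U(X) + q ) ≥ 1 - α, and P( Y ∉ [L(X)-q, U(X)+q] ) ≥ α - 1/(m+1). -/

import Mathlib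

open MeasureTheory Finset
open scoped ENNReal

/-- rank of index `j` in tuple `t`: number of entries `≤ t j`. -/
noncomputable def rnk {n : ℕ} (j : Fin n) (t : Fin n → ℝ) : ℕ :=
  (univ.filter fun i => t i ≤ t j).card

lemma card_filter_lt_sort {n : ℕ} (f : Fin n → ℝ) (hf : Function.Injective f) (j : Fin n) :
    (univ.filter fun i => f i < f (Tuple.sort f j)).card = (j : ℕ) := by
  set σ := Tuple.sort f with hσ
  have hsm : StrictMono (f ∘ σ) :=
    (Tuple.monotone_sort f).strictMono_of_injective (hf.comp σ.injective)
  have h1 : (univ.filter fun i => f i < f (σ j)).card = (univ.filter fun i => i < j).card := by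
    refine (Finset.card_equiv σ fun i => ?_).symm
    simp only [mem_filter, mem_univ, true_and]
    exact hsm.lt_iff_lt.symm
  rw [h1]
  have h2 : (univ.filter fun i => i < j) = Finset.Iio j := by ext i; simp
  rw [h2, Fin.card_Iio]

lemma card_filter_le_sort {n : ℕ} (f : Fin n → ℝ) (hf : Function.Injective f) (j : Fin n) :
    (univ.filter fun i => f i ≤ f (Tuple.sort f j)).card = (j : ℕ) + 1 := by
  set σ := Tuple.sort f with hσ
  have hsm : StrictMono (f ∘ σ) :=
    (Tuple.monotone_sort f).strictMono_of_injective (hf.comp σ.injective)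
  have h1 : (univ.filter fun i => f i ≤ f (σ j)).card = (univ.filter fun i => i ≤ j).card := by
    refine (Finset.card_equiv σ fun i => ?_).symm
    simp only [mem_filter, mem_univ, true_and]
    exact hsm.le_iff_le.symm
  rw [h1]
  have h2 : (univ.filter fun i => i ≤ j) = Finset.Iic j := by ext i; simp
  rw [h2, Fin.card_Iic]

lemma rnk_measurable {n : ℕ} (j : Fin n) : Measurable (rnk j) := by
  unfold rnk
  simp_rw [Finset.card_filter]
  exact Finset.measurable_sum _ fun i _ => Measurable.ite
    (measurableSet_le (measurable_pi_apply i) (measurable_pi_apply j))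
    measurable_const measurable_const

lemma rnk_comp {n : ℕ} (t : Fin n → ℝ) (e : Equiv.Perm (Fin n)) (j : Fin n) :
    rnk j (t ∘ e) = rnk (e j) t := by
  unfold rnk
  refine Finset.card_equiv e fun i => ?_
  simp

lemma rnk_lt_of_lt {n : ℕ} {t : Fin n → ℝ} {j j' : Fin n} (h : t j < t j') :
    rnk j t < rnk j' t := by
  unfold rnk
  apply Finset.card_lt_card
  rw [Finset.ssubset_iff_of_subset]
  · exact ⟨j', by simp [mem_filter, h.not_ge]⟩
  · intro i hi
    simp only [mem_filter, mem_univ, true_and] at hi ⊢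
    exact hi.trans h.le

lemma rnk_injective {n : ℕ} {t : Fin n → ℝ} (ht : Function.Injective t) :
    Function.Injective (fun j => rnk j t) := by
  intro j j' h
  by_contra hne
  rcases lt_or_gt_of_ne (fun he => hne (ht he) : t j ≠ t j') with h1 | h1
  · exact absurd h (rnk_lt_of_lt h1).ne
  · exact absurd h.symm (rnk_lt_of_lt h1).ne

lemma rnk_mem_Icc {n : ℕ} (j : Fin n) (t : Fin n → ℝ) : rnk j t ∈ Finset.Icc 1 n := by
  unfold rnk
  simp only [Finset.mem_Icc]
  constructor
  · exact Finset.card_pos.mpr ⟨j, by simp⟩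
  · exact (Finset.card_filter_le _ _).trans (by simp)

lemma rnk_surj {n : ℕ} {t : Fin n → ℝ} (ht : Function.Injective t) {r : ℕ}
    (hr : r ∈ Finset.Icc 1 n) : ∃ j, rnk j t = r := by
  have himg : Finset.image (fun j => rnk j t) univ = Finset.Icc 1 n := by
    apply Finset.eq_of_subset_of_card_le
    · intro x hx
      simp only [Finset.mem_image] at hx
      obtain ⟨j, _, hj⟩ := hx
      exact hj ▸ rnk_mem_Icc j t
    · rw [Finset.card_image_of_injective _ (rnk_injective ht)]
      simp [Nat.card_Icc]
  have := himg ▸ hr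
  simpa using Finset.mem_image.mp this

lemma rank_last_event {m : ℕ} (t : Fin (m + 1) → ℝ) (ht : Function.Injective t)
    (k : ℕ) (hk1 : 1 ≤ k) (hkm : k - 1 < m) :
    (t (Fin.last m) ≤ (fun i : Fin m => t i.castSucc)
        (Tuple.sort (fun i : Fin m => t i.castSucc) ⟨k - 1, hkm⟩)) ↔
      rnk (Fin.last m) t ≤ k := by
  set f : Fin m → ℝ := fun i => t i.castSucc with hf
  have hfinj : Function.Injective f := fun a b h => by
    have := ht h; exact Fin.castSucc_injective m this
  set j0 : Fin m := ⟨k - 1, hkm⟩ with hj0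
  set qv : ℝ := f (Tuple.sort f j0) with hqv
  have hrnk : rnk (Fin.last m) t
      = (univ.filter fun i : Fin m => f i < t (Fin.last m)).card + 1 := by
    unfold rnk
    rw [Finset.card_filter, Finset.card_filter, Fin.sum_univ_castSucc]
    simp only [le_refl, if_true]
    congr 1
    apply Finset.sum_congr rfl
    intro i _
    congr 1
    simp only [eq_iff_iff]
    constructor
    · intro h
      refine lt_of_le_of_ne h fun he => ?_
      exact absurd (ht he) (Fin.castSucc_lt_last i).ne
    · exact le_of_lt
  have hql : qv ≠ t (Fin.last m) := fun he =>
    absurd (ht he) (Fin.castSucc_lt_last _).ne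
  rw [hrnk]
  constructor
  · intro h
    have hlt : t (Fin.last m) < qv := lt_of_le_of_ne h (fun he => hql he.symm)
    have hsub : (univ.filter fun i : Fin m => f i < t (Fin.last m)) ⊆
        (univ.filter fun i : Fin m => f i < f (Tuple.sort f j0)) := by
      intro i hi
      simp only [mem_filter, mem_univ, true_and] at hi ⊢
      exact hi.trans hlt
    have := (Finset.card_le_card hsub).trans_eq (card_filter_lt_sort f hfinj j0)
    simp only [hj0] at this
    omega
  · intro h
    by_contra hq
    push_neg at hq
    have hsub : (univ.filter fun i : Fin m => f i ≤ f (Tuple.sort f j0)) ⊆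
        (univ.filter fun i : Fin m => f i < t (Fin.last m)) := by
      intro i hi
      simp only [mem_filter, mem_univ, true_and] at hi ⊢
      exact hi.trans_lt hq
    have := ((card_filter_le_sort f hfinj j0).symm.trans_le (Finset.card_le_card hsub))
    simp only [hj0] at this
    omega

/-- conformalized quantile regression coverage guarantee. -/
theorem stmt12 {Ω : Type*} [MeasurableSpace Ω] (μ : Measure Ω) [IsProbabilityMeasure μ]
    (m p : ℕ) (hm : 0 < m)
    (X : Fin (m + 1) → Ω → EuclideanSpace ℝ (Fin p)) (Y : Fin (m + 1) → Ω → ℝ)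
    (hXmeas : ∀ i, Measurable (X i)) (hYmeas : ∀ i, Measurable (Y i))
    (hexch : ∀ e : Equiv.Perm (Fin (m + 1)),
      Measure.map (fun ω => fun i => (X (e i) ω, Y (e i) ω)) μ =
        Measure.map (fun ω => fun i => (X i ω, Y i ω)) μ)
    (L U : EuclideanSpace ℝ (Fin p) → ℝ) (hL : Measurable L) (hU : Measurable U)
    (s : Fin (m + 1) → Ω → ℝ)
    (hs : s = fun i ω => max (L (X i ω) - Y i ω) (Y i ω - U (X i ω)))
    (hdistinct : ∀ᵐ ω ∂μ, ∀ i j, i ≠ j → s i ω ≠ s j ω)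
    (α : ℝ) (hα1 : 1 / (m + 1 : ℝ) < α) (hα2 : α < 1)
    (q : Ω → ℝ)
    (hq : q = fun ω => (fun i : Fin m => s i.castSucc ω)
      (Tuple.sort (fun i : Fin m => s i.castSucc ω)
        ⟨⌈(1 - α) * (m + 1 : ℝ)⌉₊ - 1, by
          have hm1 : (0 : ℝ) < m + 1 := by positivity
          have h0 : 1 < α * (m + 1 : ℝ) := by
            rw [div_lt_iff₀ hm1] at hα1; linarith
          have h1 : (1 - α) * (m + 1 : ℝ) ≤ m := by nlinarith
          have h2 : ⌈(1 - α) * (m + 1 : ℝ)⌉₊ ≤ m := Nat.ceil_le.mpr (by exact_mod_cast h1)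
          omega⟩)) :
    1 - α ≤ (μ {ω | L (X (Fin.last m) ω) - q ω ≤ Y (Fin.last m) ω ∧
        Y (Fin.last m) ω ≤ U (X (Fin.last m) ω) + q ω}).toReal ∧
    α - 1 / (m + 1 : ℝ) ≤ (μ {ω | ¬(L (X (Fin.last m) ω) - q ω ≤ Y (Fin.last m) ω ∧
        Y (Fin.last m) ω ≤ U (X (Fin.last m) ω) + q ω)}).toReal := by
  classical
  have hm1 : (0 : ℝ) < m + 1 := by positivity
  have h0 : 1 < α * (m + 1 : ℝ) := by rw [div_lt_iff₀ hm1] at hα1; linarith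
  set k : ℕ := ⌈(1 - α) * (m + 1 : ℝ)⌉₊ with hkdef
  have hx0 : (0 : ℝ) < (1 - α) * (m + 1 : ℝ) := by nlinarith
  have hk1 : 1 ≤ k := Nat.one_le_iff_ne_zero.mpr (by
    simp only [hkdef, ne_eq, Nat.ceil_eq_zero, not_le]; exact hx0)
  have hkm0 : k ≤ m := Nat.ceil_le.mpr (by nlinarith)
  have hkm : k - 1 < m := by omega
  -- the score vector map
  set W : Ω → Fin (m + 1) → ℝ := fun ω i => s i ω with hWdef
  have hWm : Measurable W := by
    rw [hWdef, hs]
    exact measurable_pi_lambda _ fun i =>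
      ((hL.comp (hXmeas i)).sub (hYmeas i)).max ((hYmeas i).sub (hU.comp (hXmeas i)))
  have hmap : ∀ (e : Equiv.Perm (Fin (m + 1))),
      μ.map (fun ω => W ω ∘ e) = μ.map W := by
    intro e
    set g : (EuclideanSpace ℝ (Fin p)) × ℝ → ℝ :=
      fun z => max (L z.1 - z.2) (z.2 - U z.1) with hgdef
    have hgm : Measurable g :=
      ((hL.comp measurable_fst).sub measurable_snd).max
        ((measurable_snd).sub (hU.comp measurable_fst))
    set G : (Fin (m + 1) → (EuclideanSpace ℝ (Fin p)) × ℝ) → (Fin (m + 1) → ℝ) :=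
      fun v i => g (v i) with hGdef
    have hGm : Measurable G :=
      measurable_pi_lambda _ fun i => hgm.comp (measurable_pi_apply i)
    have hPe : Measurable (fun ω => fun i => (X (e i) ω, Y (e i) ω) :
        Ω → Fin (m + 1) → (EuclideanSpace ℝ (Fin p)) × ℝ) :=
      measurable_pi_lambda _ fun i => (hXmeas (e i)).prodMk (hYmeas (e i))
    have hP : Measurable (fun ω => fun i => (X i ω, Y i ω) :
        Ω → Fin (m + 1) → (EuclideanSpace ℝ (Fin p)) × ℝ) :=
      measurable_pi_lambda _ fun i => (hXmeas i).prodMk (hYmeas i)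
    have hWs : (fun ω => W ω ∘ e) = G ∘ (fun ω => fun i => (X (e i) ω, Y (e i) ω)) := by
      funext ω; funext i
      simp [hWdef, hGdef, hgdef, hs, Function.comp]
    have hWs2 : W = G ∘ (fun ω => fun i => (X i ω, Y i ω)) := by
      funext ω; funext i
      simp [hWdef, hGdef, hgdef, hs, Function.comp]
    rw [hWs, hWs2, ← Measure.map_map hGm hPe, ← Measure.map_map hGm hP, hexch e]
  -- the rank events
  set B : Fin (m + 1) → ℕ → Set Ω := fun j r => W ⁻¹' (rnk j ⁻¹' {r}) with hB
  have hBmeas : ∀ j r, MeasurableSet (B j r) := fun j r =>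
    hWm ((rnk_measurable j) (measurableSet_singleton r))
  -- exchangeability of ranks
  have hBeq : ∀ j r, μ (B j r) = μ (B (Fin.last m) r) := by
    intro j r
    set e : Equiv.Perm (Fin (m + 1)) := Equiv.swap j (Fin.last m) with he
    have hpre : (fun ω => W ω ∘ e) ⁻¹' (rnk (Fin.last m) ⁻¹' {r})
        = W ⁻¹' (rnk (e (Fin.last m)) ⁻¹' {r}) := by
      ext ω
      simp only [Set.mem_preimage, Set.mem_singleton_iff]
      rw [rnk_comp]
    have hcm : Measurable (fun ω => W ω ∘ e) :=
      measurable_pi_lambda _ fun i => (measurable_pi_apply (e i)).comp hWm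
    have hS : MeasurableSet (rnk (Fin.last m) ⁻¹' {r} : Set (Fin (m + 1) → ℝ)) :=
      (rnk_measurable _) (measurableSet_singleton r)
    have h1 : μ ((fun ω => W ω ∘ e) ⁻¹' (rnk (Fin.last m) ⁻¹' {r}))
        = μ (W ⁻¹' (rnk (Fin.last m) ⁻¹' {r})) := by
      rw [← Measure.map_apply hcm hS, ← Measure.map_apply hWm hS, hmap e]
    rw [hpre] at h1
    have he2 : e (Fin.last m) = j := Equiv.swap_apply_right j (Fin.last m)
    rw [he2] at h1
    exact h1
  -- almost sure injectivity
  have hDc : μ {ω | ¬ Function.Injective (W ω)} = 0 := by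
    have h1 : μ {ω | ¬ ∀ i j, i ≠ j → s i ω ≠ s j ω} = 0 := ae_iff.mp hdistinct
    refine measure_mono_null ?_ h1
    intro ω hω
    simp only [Set.mem_setOf_eq] at hω ⊢
    intro hall
    apply hω
    intro a b hab
    by_contra hne
    push_neg at hne
    exact hall a b hne hab
  -- uniformity of ranks
  have huniform : ∀ r ∈ Finset.Icc 1 (m + 1),
      μ (B (Fin.last m) r) = (((m : ℝ≥0∞) + 1))⁻¹ := by
    intro r hr
    have hdisj : ((Finset.univ : Finset (Fin (m + 1))) : Set (Fin (m + 1))).Pairwise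
        (Function.onFun (MeasureTheory.AEDisjoint μ) (fun j => B j r)) := by
      intro j _ j' _ hjj'
      refine measure_mono_null ?_ hDc
      intro ω hω
      simp only [Set.mem_inter_iff, hB, Set.mem_preimage, Set.mem_singleton_iff] at hω
      simp only [Set.mem_setOf_eq]
      intro hinj
      exact hjj' (rnk_injective hinj (hω.1.trans hω.2.symm))
    have hsum : μ (⋃ j ∈ (Finset.univ : Finset (Fin (m + 1))), B j r)
        = ∑ j : Fin (m + 1), μ (B j r) :=
      measure_biUnion_finset₀ hdisj fun j _ => (hBmeas j r).nullMeasurableSet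
    have hcover : μ (⋃ j ∈ (Finset.univ : Finset (Fin (m + 1))), B j r) = 1 := by
      have hsubc : (⋃ j ∈ (Finset.univ : Finset (Fin (m + 1))), B j r)ᶜ
          ⊆ {ω | ¬ Function.Injective (W ω)} := by
        intro ω hω
        simp only [Set.mem_compl_iff, Set.mem_iUnion, not_exists] at hω
        simp only [Set.mem_setOf_eq]
        intro hinj
        obtain ⟨j, hj⟩ := rnk_surj hinj hr
        exact hω j (Finset.mem_univ j) hj
      have hc0 : μ (⋃ j ∈ (Finset.univ : Finset (Fin (m + 1))), B j r)ᶜ = 0 :=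
        measure_mono_null hsubc hDc
      have hms : MeasurableSet (⋃ j ∈ (Finset.univ : Finset (Fin (m + 1))), B j r) :=
        MeasurableSet.biUnion (Finset.countable_toSet _) fun j _ => hBmeas j r
      rwa [prob_compl_eq_zero_iff hms] at hc0
    have hsum2 : ∑ j : Fin (m + 1), μ (B j r)
        = ((m : ℝ≥0∞) + 1) * μ (B (Fin.last m) r) := by
      rw [Finset.sum_congr rfl fun j _ => hBeq j r, Finset.sum_const, Finset.card_univ,
        Fintype.card_fin, nsmul_eq_mul]
      push_cast
      ring
    have hfin : ((m : ℝ≥0∞) + 1) * μ (B (Fin.last m) r) = 1 := by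
      rw [← hsum2, ← hsum, hcover]
    have hn0 : ((m : ℝ≥0∞) + 1) ≠ 0 := by simp
    have hnt : ((m : ℝ≥0∞) + 1) ≠ ⊤ := by simp [ENNReal.add_ne_top]
    calc μ (B (Fin.last m) r)
        = ((m : ℝ≥0∞) + 1)⁻¹ * (((m : ℝ≥0∞) + 1) * μ (B (Fin.last m) r)) := by
          rw [← mul_assoc, ENNReal.inv_mul_cancel hn0 hnt, one_mul]
      _ = ((m : ℝ≥0∞) + 1)⁻¹ := by rw [hfin, mul_one]
  -- the event as a rank event
  set A : Set Ω := {ω | L (X (Fin.last m) ω) - q ω ≤ Y (Fin.last m) ω ∧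
      Y (Fin.last m) ω ≤ U (X (Fin.last m) ω) + q ω} with hA
  set E : Set Ω := ⋃ r ∈ Finset.Icc 1 k, B (Fin.last m) r with hE
  have hEmeas : MeasurableSet E :=
    MeasurableSet.biUnion (Finset.countable_toSet _) fun r _ => hBmeas _ r
  have hAE : ∀ᵐ ω ∂μ, (ω ∈ A ↔ ω ∈ E) := by
    filter_upwards [hdistinct] with ω hω
    have hinj : Function.Injective (W ω) := by
      intro a b hab
      by_contra hne
      exact hω a b hne hab
    have hq' : q ω = (fun i : Fin m => (W ω) i.castSucc)
        (Tuple.sort (fun i : Fin m => (W ω) i.castSucc) ⟨k - 1, hkm⟩) := by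
      rw [hq]
    have hiff1 : ω ∈ A ↔ (W ω) (Fin.last m) ≤ (fun i : Fin m => (W ω) i.castSucc)
        (Tuple.sort (fun i : Fin m => (W ω) i.castSucc) ⟨k - 1, hkm⟩) := by
      rw [← hq']
      simp only [hA, Set.mem_setOf_eq, hWdef, hs]
      rw [max_le_iff]
      constructor
      · rintro ⟨h1, h2⟩; constructor <;> linarith
      · rintro ⟨h1, h2⟩; constructor <;> linarith
    rw [hiff1, rank_last_event (W ω) hinj k hk1 hkm]
    simp only [hE, Set.mem_iUnion, hB, Set.mem_preimage, Set.mem_singleton_iff,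
      Finset.mem_Icc]
    constructor
    · intro h
      have hmem := rnk_mem_Icc (Fin.last m) (W ω)
      rw [Finset.mem_Icc] at hmem
      exact ⟨rnk (Fin.last m) (W ω), ⟨hmem.1, h⟩, rfl⟩
    · rintro ⟨r, ⟨hr1, hr2⟩, hrw⟩
      omega
  have hAEeq : A =ᵐ[μ] E := Filter.eventuallyEq_set.mpr hAE
  -- compute μ E
  have hμE : μ E = (k : ℝ≥0∞) * (((m : ℝ≥0∞) + 1))⁻¹ := by
    have hdisj : ((Finset.Icc 1 k : Finset ℕ) : Set ℕ).Pairwise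
        (Function.onFun Disjoint (fun r => B (Fin.last m) r)) := by
      intro r _ r' _ hrr'
      simp only [Function.onFun, Set.disjoint_left]
      intro ω hω hω'
      simp only [hB, Set.mem_preimage, Set.mem_singleton_iff] at hω hω'
      exact hrr' (hω.symm.trans hω')
    rw [hE, measure_biUnion_finset hdisj fun r _ => hBmeas _ r]
    have hcongr : ∀ r ∈ Finset.Icc 1 k, μ (B (Fin.last m) r) = (((m : ℝ≥0∞) + 1))⁻¹ := by
      intro r hr
      apply huniform
      simp only [Finset.mem_Icc] at hr ⊢
      omega
    rw [Finset.sum_congr rfl hcongr, Finset.sum_const, Nat.card_Icc, nsmul_eq_mul]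
    norm_num
  have hμA : μ A = (k : ℝ≥0∞) * (((m : ℝ≥0∞) + 1))⁻¹ := (measure_congr hAEeq).trans hμE
  have hklen : (k : ℝ≥0∞) * (((m : ℝ≥0∞) + 1))⁻¹ ≤ 1 := by
    rw [← div_eq_mul_inv]
    refine ENNReal.div_le_of_le_mul ?_
    rw [one_mul]
    have : (k : ℝ≥0∞) ≤ ((m : ℕ) : ℝ≥0∞) + 1 := by
      exact_mod_cast (show (k : ℕ) ≤ m + 1 by omega)
    exact this
  have hμAc : μ Aᶜ = 1 - (k : ℝ≥0∞) * (((m : ℝ≥0∞) + 1))⁻¹ := by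
    have hcc : Aᶜ =ᵐ[μ] Eᶜ := Filter.eventuallyEq_set.mpr <| by
      filter_upwards [hAE] with ω h
      exact not_congr h
    rw [show μ Aᶜ = μ Eᶜ from measure_congr hcc, prob_compl_eq_one_sub hEmeas, hμE]
  -- convert to real numbers
  have htoReal : (μ A).toReal = (k : ℝ) / ((m : ℝ) + 1) := by
    rw [hμA, ENNReal.toReal_mul, ENNReal.toReal_inv,
      ENNReal.toReal_add (ENNReal.natCast_ne_top m) ENNReal.one_ne_top,
      ENNReal.toReal_natCast, ENNReal.toReal_natCast, ENNReal.toReal_one,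
      div_eq_mul_inv]
  have htoRealc : (μ Aᶜ).toReal = 1 - (k : ℝ) / ((m : ℝ) + 1) := by
    rw [hμAc, ENNReal.toReal_sub_of_le hklen (by simp)]
    rw [ENNReal.toReal_mul, ENNReal.toReal_inv,
      ENNReal.toReal_add (ENNReal.natCast_ne_top m) ENNReal.one_ne_top,
      ENNReal.toReal_natCast, ENNReal.toReal_natCast, ENNReal.toReal_one,
      div_eq_mul_inv]
  have hkceil : (1 - α) * (m + 1 : ℝ) ≤ (k : ℝ) := Nat.le_ceil _
  have hkceil2 : (k : ℝ) < (1 - α) * (m + 1 : ℝ) + 1 := Nat.ceil_lt_add_one hx0.le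
  constructor
  · rw [htoReal]
    rw [le_div_iff₀ hm1]
    nlinarith
  · have hsetc : {ω | ¬(L (X (Fin.last m) ω) - q ω ≤ Y (Fin.last m) ω ∧
        Y (Fin.last m) ω ≤ U (X (Fin.last m) ω) + q ω)} = Aᶜ := rfl
    rw [hsetc, htoRealc]
    have hdiv : (k : ℝ) / ((m : ℝ) + 1) < (1 - α) + 1 / ((m : ℝ) + 1) := by
      rw [div_lt_iff₀ hm1]
      have hexp : ((1 - α) + 1 / ((m : ℝ) + 1)) * ((m : ℝ) + 1)
          = (1 - α) * ((m : ℝ) + 1) + 1 := by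
        field_simp
      rw [hexp]
      exact hkceil2
    linarith
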